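/- Let P be a nonnegative d_1×…×d_n tensor with a decomposition P = a_1⊗…⊗a_n + b_1⊗…⊗b_n where for each r the entries satisfy a_{rk} b_{rl} ≥ a_{rl} b_{rk} whenever k ≤ l (i.e. all 2×2 minors of the d_r×2 matrix (a_r, b_r) are nonnegative, with rows in given order). Then P is e-supermodular: for all multi-indices i = (i_1,…,i_n) and j = (j_1,…,j_n), setting k = (min(i_1,j_1),…,min(i_n,j_n)) and l = (max(i_1,j_1),…,max(i_n,j_n)), one has p_i · p_j ≤ p_k · p_l. -/

import Mathlib

open Finset

lemma step_ineq (m M A B P Q : ℝ) (hm : 0 ≤ m) (hmM : m ≤ M)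
    (hP : 0 ≤ P) (hPA : P ≤ A) (hPB : P ≤ B) (hAQ : A ≤ Q) (hBQ : B ≤ Q)
    (hprod : A * B = P * Q) : M * A + m * B ≤ m * P + M * Q := by
  have hQ : 0 ≤ Q := le_trans (le_trans hP hPA) hAQ
  rcases eq_or_lt_of_le hQ with h | h
  · have hA : A = 0 := le_antisymm (h ▸ hAQ) (le_trans hP hPA)
    have hB : B = 0 := le_antisymm (h ▸ hBQ) (le_trans hP hPB)
    have hP0 : P = 0 := le_antisymm (hA ▸ hPA) hP
    simp [hA, hB, hP0, ← h]
  · have key : (Q - A) * (M * Q - m * B) ≥ 0 :=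
      mul_nonneg (by linarith) (by nlinarith [mul_le_mul hmM hBQ (le_trans hP hPB) (le_trans hm hmM)])
    nlinarith [key, h]

lemma key_prod {ι : Type*} (s : Finset ι) (x y : ι → ℝ)
    (hx : ∀ i, 0 ≤ x i) (hy : ∀ i, 0 ≤ y i) :
    (∏ i ∈ s, x i) + ∏ i ∈ s, y i ≤
      (∏ i ∈ s, min (x i) (y i)) + ∏ i ∈ s, max (x i) (y i) := by
  classical
  induction s using Finset.induction_on with
  | empty => simp
  | insert _ _ hns ih =>
    rename_i c s
    rw [prod_insert hns, prod_insert hns, prod_insert hns, prod_insert hns]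
    set A := ∏ i ∈ s, x i with hA
    set B := ∏ i ∈ s, y i with hB
    set Pp := ∏ i ∈ s, min (x i) (y i) with hPp
    set Qq := ∏ i ∈ s, max (x i) (y i) with hQq
    have hminn : ∀ i : ι, 0 ≤ min (x i) (y i) := fun i => le_min (hx i) (hy i)
    have hP0 : 0 ≤ Pp := prod_nonneg fun i _ => hminn i
    have hPA : Pp ≤ A := prod_le_prod (fun i _ => hminn i) (fun i _ => min_le_left _ _)
    have hPB : Pp ≤ B := prod_le_prod (fun i _ => hminn i) (fun i _ => min_le_right _ _)
    have hAQ : A ≤ Qq := prod_le_prod (fun i _ => hx i) (fun i _ => le_max_left _ _)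
    have hBQ : B ≤ Qq := prod_le_prod (fun i _ => hy i) (fun i _ => le_max_right _ _)
    have hprod : A * B = Pp * Qq := by
      rw [hA, hB, hPp, hQq, ← prod_mul_distrib, ← prod_mul_distrib]
      exact prod_congr rfl fun i _ => (min_mul_max (x i) (y i)).symm
    rcases le_total (x c) (y c) with h | h
    · rw [min_eq_left h, max_eq_right h]
      have := step_ineq (x c) (y c) B A Pp Qq (hx c) h hP0 hPB hPA hBQ hAQ
        (by rw [mul_comm]; exact hprod)
      linarith
    · rw [min_eq_right h, max_eq_left h]
      have := step_ineq (y c) (x c) A B Pp Qq (hy c) h hP0 hPA hPB hAQ hBQ hprod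
      linarith

/-- a nonnegative rank-2 decomposition with all 2×2 minors of the
matrices (a_r, b_r) nonnegative yields an e-supermodular tensor. -/
theorem stmt_12 {n : ℕ} (d : Fin n → ℕ)
    (a b : ∀ r, Fin (d r) → ℝ)
    (ha : ∀ r k, 0 ≤ a r k) (hb : ∀ r k, 0 ≤ b r k)
    (hminor : ∀ r (k l : Fin (d r)), k ≤ l → a r l * b r k ≤ a r k * b r l)
    (P : (∀ r, Fin (d r)) → ℝ)
    (hP : ∀ i, P i = (∏ r, a r (i r)) + ∏ r, b r (i r)) :
    ∀ i j : ∀ r, Fin (d r),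
      P i * P j ≤
        P (fun r => min (i r) (j r)) * P (fun r => max (i r) (j r)) := by
  intro i j
  rw [hP, hP, hP, hP]
  have haa : (∏ r, a r (i r)) * ∏ r, a r (j r)
      = (∏ r, a r (min (i r) (j r))) * ∏ r, a r (max (i r) (j r)) := by
    rw [← prod_mul_distrib, ← prod_mul_distrib]
    refine prod_congr rfl fun r _ => ?_
    rcases le_total (i r) (j r) with h | h
    · rw [min_eq_left h, max_eq_right h]
    · rw [min_eq_right h, max_eq_left h, mul_comm]
  have hbb : (∏ r, b r (i r)) * ∏ r, b r (j r)
      = (∏ r, b r (min (i r) (j r))) * ∏ r, b r (max (i r) (j r)) := by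
    rw [← prod_mul_distrib, ← prod_mul_distrib]
    refine prod_congr rfl fun r _ => ?_
    rcases le_total (i r) (j r) with h | h
    · rw [min_eq_left h, max_eq_right h]
    · rw [min_eq_right h, max_eq_left h, mul_comm]
  have hcross : (∏ r, a r (i r)) * (∏ r, b r (j r))
        + (∏ r, a r (j r)) * (∏ r, b r (i r))
      ≤ (∏ r, a r (max (i r) (j r))) * (∏ r, b r (min (i r) (j r)))
        + (∏ r, a r (min (i r) (j r))) * (∏ r, b r (max (i r) (j r))) := by
    have hkey := key_prod Finset.univ
      (fun r => a r (i r) * b r (j r)) (fun r => a r (j r) * b r (i r))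
      (fun r => mul_nonneg (ha _ _) (hb _ _)) (fun r => mul_nonneg (ha _ _) (hb _ _))
    have hmin : ∀ r : Fin n, min (a r (i r) * b r (j r)) (a r (j r) * b r (i r))
        = a r (max (i r) (j r)) * b r (min (i r) (j r)) := by
      intro r
      rcases le_total (i r) (j r) with h | h
      · rw [min_eq_left h, max_eq_right h]
        exact min_eq_right (hminor r (i r) (j r) h)
      · rw [min_eq_right h, max_eq_left h]
        exact min_eq_left (hminor r (j r) (i r) h)
    have hmax : ∀ r : Fin n, max (a r (i r) * b r (j r)) (a r (j r) * b r (i r))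
        = a r (min (i r) (j r)) * b r (max (i r) (j r)) := by
      intro r
      rcases le_total (i r) (j r) with h | h
      · rw [min_eq_left h, max_eq_right h]
        exact max_eq_left (hminor r (i r) (j r) h)
      · rw [min_eq_right h, max_eq_left h]
        exact max_eq_right (hminor r (j r) (i r) h)
    simp only [hmin, hmax] at hkey
    rw [prod_mul_distrib, prod_mul_distrib, prod_mul_distrib, prod_mul_distrib] at hkey
    linarith
  nlinarith [haa, hbb, hcross]
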